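/- Stability of the Volterra integro-differential system (Theorem 3): Let A : [0,∞) → ℝ^{n×n} and B : {(t,τ): 0 ≤ τ ≤ t} → ℝ^{n×n} be continuous, and suppose Λ(A(t)) + ∫₀ᵗ ‖B(t, s)‖ ds < 0 for all t ≥ 0. Then the trivial solution of X'(t) = A(t)X(t) + ∫₀ᵗ B(t, τ)X(τ) dτ is stable: for every ε > 0 there exists δ > 0 such that every solution with ‖X(0)‖ ≤ δ satisfies ‖X(t)‖ ≤ ε for all t ≥ 0. -/

import Mathlib

open scoped Topology
open Filter Set

noncomputable def logNorm {E : Type*} [NormedAddCommGroup E] [NormedSpace ℝ E]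
    (K : E →L[ℝ] E) : ℝ :=
  sInf ((fun h : ℝ => (‖ContinuousLinearMap.id ℝ E + h • K‖ - 1) / h) '' Set.Ioi 0)

noncomputable def matNorm {n : ℕ} (A : Matrix (Fin n) (Fin n) ℝ) : ℝ :=
  ‖LinearMap.toContinuousLinearMap A.mulVecLin‖

noncomputable def matLogNorm {n : ℕ} (A : Matrix (Fin n) (Fin n) ℝ) : ℝ :=
  logNorm (LinearMap.toContinuousLinearMap A.mulVecLin)

lemma logNorm_eventually_le {E : Type*} [NormedAddCommGroup E] [NormedSpace ℝ E]
    (K : E →L[ℝ] E) {μ : ℝ} (hμ : logNorm K < μ) :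
    ∀ᶠ h in 𝓝[>] (0:ℝ), ‖ContinuousLinearMap.id ℝ E + h • K‖ ≤ 1 + h * μ := by
  obtain ⟨h₀, h₀pos, hkey⟩ :
      ∃ h₀ : ℝ, 0 < h₀ ∧ ‖ContinuousLinearMap.id ℝ E + h₀ • K‖ ≤ 1 + h₀ * μ := by
    by_contra hcon
    push_neg at hcon
    have hne : ((fun h : ℝ => (‖ContinuousLinearMap.id ℝ E + h • K‖ - 1) / h) '' Set.Ioi 0).Nonempty :=
      ⟨_, Set.mem_image_of_mem _ (mem_Ioi.2 one_pos)⟩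
    have : μ ≤ logNorm K := by
      refine le_csInf hne ?_
      rintro x ⟨h, hh, rfl⟩
      rw [mem_Ioi] at hh
      rw [le_div_iff₀ hh]
      have := hcon h hh
      nlinarith
    linarith
  filter_upwards [Ioc_mem_nhdsGT_of_mem (⟨le_refl (0:ℝ), h₀pos⟩ : (0:ℝ) ∈ Ico 0 h₀)]
    with h hh
  obtain ⟨hpos, hle⟩ := hh
  have hne : h₀ ≠ 0 := h₀pos.ne'
  have hident : ContinuousLinearMap.id ℝ E + h • K
      = (1 - h/h₀) • (ContinuousLinearMap.id ℝ E)
        + (h/h₀) • (ContinuousLinearMap.id ℝ E + h₀ • K) := by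
    rw [smul_add, smul_smul, div_mul_cancel₀ h hne, sub_smul, one_smul]
    abel
  have h1 : (0:ℝ) ≤ 1 - h/h₀ := by
    rw [sub_nonneg, div_le_one h₀pos]; exact hle
  have h2 : (0:ℝ) ≤ h/h₀ := le_of_lt (div_pos hpos h₀pos)
  have e1 := norm_smul (1 - h/h₀) (ContinuousLinearMap.id ℝ E)
  rw [Real.norm_eq_abs, abs_of_nonneg h1] at e1
  have e2 := norm_smul (h/h₀) (ContinuousLinearMap.id ℝ E + h₀ • K)
  rw [Real.norm_eq_abs, abs_of_nonneg h2] at e2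
  calc ‖ContinuousLinearMap.id ℝ E + h • K‖
      = ‖(1 - h/h₀) • (ContinuousLinearMap.id ℝ E)
        + (h/h₀) • (ContinuousLinearMap.id ℝ E + h₀ • K)‖ := by rw [hident]
    _ ≤ ‖(1 - h/h₀) • (ContinuousLinearMap.id ℝ E)‖
        + ‖(h/h₀) • (ContinuousLinearMap.id ℝ E + h₀ • K)‖ := norm_add_le _ _
    _ ≤ (1 - h/h₀) * 1 + (h/h₀) * (1 + h₀ * μ) := by
        rw [e1, e2]
        have hid : ‖ContinuousLinearMap.id ℝ E‖ ≤ 1 := ContinuousLinearMap.norm_id_le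
        have hn1 : (0:ℝ) ≤ ‖ContinuousLinearMap.id ℝ E‖ := norm_nonneg _
        nlinarith [mul_le_mul_of_nonneg_left hid h1, mul_le_mul_of_nonneg_left hkey h2]
    _ = 1 + h * μ := by field_simp; ring

lemma mulVec_norm_le {n : ℕ} (M : Matrix (Fin n) (Fin n) ℝ) (v : Fin n → ℝ) :
    ‖M.mulVec v‖ ≤ matNorm M * ‖v‖ := by
  have := (LinearMap.toContinuousLinearMap M.mulVecLin).le_opNorm v
  simpa [matNorm, LinearMap.coe_toContinuousLinearMap', Matrix.mulVecLin_apply] using this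

lemma continuous_matNorm {n : ℕ} : Continuous (matNorm (n := n)) := by
  have : Continuous fun M : Matrix (Fin n) (Fin n) ℝ =>
      LinearMap.toContinuousLinearMap M.mulVecLin := by
    let L : Matrix (Fin n) (Fin n) ℝ →ₗ[ℝ] ((Fin n → ℝ) →L[ℝ] (Fin n → ℝ)) :=
      { toFun := fun M => LinearMap.toContinuousLinearMap M.mulVecLin
        map_add' := fun M N => by
          ext v
          simp [LinearMap.coe_toContinuousLinearMap', Matrix.mulVecLin_apply,
            Matrix.add_mulVec]
        map_smul' := fun c M => by
          ext v
          simp [LinearMap.coe_toContinuousLinearMap', Matrix.mulVecLin_apply,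
            Matrix.smul_mulVec] }
    exact L.continuous_of_finiteDimensional
  exact continuous_norm.comp this

lemma matNorm_nonneg {n : ℕ} (M : Matrix (Fin n) (Fin n) ℝ) : 0 ≤ matNorm M :=
  norm_nonneg _

set_option maxHeartbeats 2000000 in
/-- Stability of the trivial solution of the Volterra integro-differential system
`X'(t) = A(t) X(t) + ∫₀ᵗ B(t, τ) X(τ) dτ` (Theorem 3): if
`Λ(A(t)) + ∫₀ᵗ ‖B(t, s)‖ ds < 0` for all `t ≥ 0`, then for every `ε > 0` there is `δ > 0`
such that every solution with `‖X(0)‖ ≤ δ` satisfies `‖X(t)‖ ≤ ε` for all `t ≥ 0`. -/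
theorem volterra_integrodifferential_stability {n : ℕ}
    (A : ℝ → Matrix (Fin n) (Fin n) ℝ) (hA : ContinuousOn A (Set.Ici 0))
    (B : ℝ → ℝ → Matrix (Fin n) (Fin n) ℝ)
    (hB : ContinuousOn (fun p : ℝ × ℝ => B p.1 p.2) {p : ℝ × ℝ | 0 ≤ p.2 ∧ p.2 ≤ p.1})
    (hcond : ∀ t : ℝ, 0 ≤ t →
      matLogNorm (A t) + (∫ s in (0 : ℝ)..t, matNorm (B t s)) < 0) :
    ∀ ε > (0 : ℝ), ∃ δ > (0 : ℝ), ∀ X : ℝ → (Fin n → ℝ),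
      (∀ t : ℝ, 0 ≤ t →
        HasDerivAt X ((A t).mulVec (X t) + ∫ τ in (0 : ℝ)..t, (B t τ).mulVec (X τ)) t) →
      ‖X 0‖ ≤ δ → ∀ t : ℝ, 0 ≤ t → ‖X t‖ ≤ ε := by
  intro ε hε
  refine ⟨ε, hε, ?_⟩
  intro X hX hX0 t₀ ht₀
  by_contra hcontra
  push_neg at hcontra
  set c : ℝ := ‖X t₀‖ with hc
  have hεc : ε < c := hcontra
  have hcpos : 0 < c := lt_trans hε hεc
  set S : Set ℝ := {s : ℝ | 0 ≤ s ∧ c ≤ ‖X s‖} with hS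
  have hS0 : t₀ ∈ S := ⟨ht₀, le_refl c⟩
  have hbdd : BddBelow S := ⟨0, fun s hs => hs.1⟩
  set T : ℝ := sInf S with hT
  have hT0 : 0 ≤ T := le_csInf ⟨t₀, hS0⟩ fun s hs => hs.1
  have hTle : ∀ s ∈ S, T ≤ s := fun s hs => csInf_le hbdd hs
  have hcontX : ∀ s : ℝ, 0 ≤ s → ContinuousAt X s := fun s hs => (hX s hs).continuousAt
  have hTmem : c ≤ ‖X T‖ := by
    by_contra hlt
    push_neg at hlt
    have hev : ∀ᶠ s in 𝓝 T, ‖X s‖ < c := by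
      have hcn : ContinuousAt (fun s => ‖X s‖) T := (hcontX T hT0).norm
      have : Iio c ∈ 𝓝 (‖X T‖) := Iio_mem_nhds hlt
      exact hcn.preimage_mem_nhds this
    rw [Metric.eventually_nhds_iff] at hev
    obtain ⟨d, dpos, hd⟩ := hev
    have hcon : T + d ≤ T := by
      refine le_csInf ⟨t₀, hS0⟩ ?_
      intro s hs
      by_contra hsd
      push_neg at hsd
      have h1 : T ≤ s := hTle s hs
      have h2 : dist s T < d := by
        rw [Real.dist_eq, abs_of_nonneg (by linarith)]; linarith
      exact absurd hs.2 (not_le.2 (hd h2))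
    linarith
  have hTpos : 0 < T := by
    rcases hT0.lt_or_eq with h | h
    · exact h
    · exfalso; rw [← h] at hTmem; linarith
  have hless : ∀ s : ℝ, 0 ≤ s → s < T → ‖X s‖ < c := by
    intro s hs0 hsT
    by_contra hge
    push_neg at hge
    exact absurd (hTle s ⟨hs0, hge⟩) (not_le.2 hsT)
  set v : Fin n → ℝ := X T with hv
  set c' : ℝ := ‖v‖ with hc'
  have hc'c : c ≤ c' := hTmem
  have hc'pos : 0 < c' := lt_of_lt_of_le hcpos hc'c
  have hXle : ∀ τ ∈ Icc (0:ℝ) T, ‖X τ‖ ≤ c' := by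
    intro τ hτ
    rcases lt_or_eq_of_le hτ.2 with h | h
    · exact le_of_lt (lt_of_lt_of_le (hless τ hτ.1 h) hc'c)
    · rw [h]
  set K : (Fin n → ℝ) →L[ℝ] (Fin n → ℝ) :=
    LinearMap.toContinuousLinearMap (A T).mulVecLin with hKdef
  have hKapp : ∀ u : Fin n → ℝ, K u = (A T).mulVec u := by
    intro u
    simp [hKdef, LinearMap.coe_toContinuousLinearMap', Matrix.mulVecLin_apply]
  set I : ℝ := ∫ s in (0:ℝ)..T, matNorm (B T s) with hIdef
  set L : ℝ := matLogNorm (A T) with hLdef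
  have hLI : L + I < 0 := hcond T hT0
  set μ : ℝ := (L - I) / 2 with hμdef
  have hLμ : L < μ := by rw [hμdef]; linarith
  have hμI : μ + I < 0 := by rw [hμdef]; linarith
  set β : ℝ := -((μ + I) * c') / 2 with hβdef
  have hβpos : 0 < β := by rw [hβdef]; nlinarith
  -- integral bound
  have hXcont : ContinuousOn X (Icc 0 T) := fun s hs => (hcontX s hs.1).continuousWithinAt
  have hBcont : ContinuousOn (fun τ => B T τ) (Icc 0 T) := by
    have hmap : MapsTo (fun τ : ℝ => ((T:ℝ), τ)) (Icc 0 T)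
        {p : ℝ × ℝ | 0 ≤ p.2 ∧ p.2 ≤ p.1} := fun τ hτ => ⟨hτ.1, hτ.2⟩
    exact hB.comp (Continuous.continuousOn (by fun_prop)) hmap
  have huIcc : uIcc (0:ℝ) T = Icc 0 T := uIcc_of_le hT0
  have hmv : Continuous fun p : Matrix (Fin n) (Fin n) ℝ × (Fin n → ℝ) => p.1.mulVec p.2 :=
    continuous_fst.matrix_mulVec continuous_snd
  have hint1 : IntervalIntegrable (fun τ => ‖(B T τ).mulVec (X τ)‖)
      MeasureTheory.volume 0 T := by
    apply ContinuousOn.intervalIntegrable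
    rw [huIcc]
    exact (hmv.comp_continuousOn (hBcont.prodMk hXcont)).norm
  have hint2 : IntervalIntegrable (fun τ => matNorm (B T τ) * c')
      MeasureTheory.volume 0 T := by
    apply ContinuousOn.intervalIntegrable
    rw [huIcc]
    exact (continuous_matNorm.comp_continuousOn hBcont).mul continuousOn_const
  set V : Fin n → ℝ := ∫ τ in (0:ℝ)..T, (B T τ).mulVec (X τ) with hVdef
  have hVnorm : ‖V‖ ≤ I * c' := by
    calc ‖V‖ ≤ ∫ τ in (0:ℝ)..T, ‖(B T τ).mulVec (X τ)‖ :=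
          intervalIntegral.norm_integral_le_integral_norm hT0
      _ ≤ ∫ τ in (0:ℝ)..T, matNorm (B T τ) * c' := by
          refine intervalIntegral.integral_mono_on hT0 hint1 hint2 ?_
          intro τ hτ
          calc ‖(B T τ).mulVec (X τ)‖ ≤ matNorm (B T τ) * ‖X τ‖ := mulVec_norm_le _ _
            _ ≤ matNorm (B T τ) * c' :=
                mul_le_mul_of_nonneg_left (hXle τ hτ) (matNorm_nonneg _)
      _ = I * c' := intervalIntegral.integral_mul_const c' _
  set D : Fin n → ℝ := (A T).mulVec v + V with hDdef
  have hD : HasDerivAt X D T := hX T hT0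
  have hlo : (fun s => X s - X T - (s - T) • D) =o[𝓝 T] fun s => s - T :=
    hasDerivAt_iff_isLittleO.mp hD
  have htend : Tendsto (fun h : ℝ => T - h) (𝓝[>] (0:ℝ)) (𝓝 T) := by
    have h1 : Tendsto (fun h : ℝ => T - h) (𝓝 (0:ℝ)) (𝓝 (T - 0)) :=
      tendsto_const_nhds.sub tendsto_id
    rw [sub_zero] at h1
    exact h1.mono_left nhdsWithin_le_nhds
  have herr0 := (hlo.comp_tendsto htend).def hβpos
  have hμK : logNorm K < μ := hLμ
  have hKev := logNorm_eventually_le K hμK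
  set C : ℝ := ‖K (K v)‖ with hCdef
  set γ : ℝ := μ * (I * c' + β) + C with hγdef
  have hev1 : ∀ᶠ h in 𝓝[>] (0:ℝ), h < T :=
    mem_nhdsWithin_of_mem_nhds (Iio_mem_nhds hTpos)
  have hev2 : ∀ᶠ h in 𝓝[>] (0:ℝ), h < β / (|γ| + 1) :=
    mem_nhdsWithin_of_mem_nhds (Iio_mem_nhds (div_pos hβpos (by positivity)))
  have hev3 : ∀ᶠ h in 𝓝[>] (0:ℝ), h < 1 / (|μ| + 1) :=
    mem_nhdsWithin_of_mem_nhds (Iio_mem_nhds (by positivity))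
  have hevpos : ∀ᶠ h in 𝓝[>] (0:ℝ), h ∈ Ioi (0:ℝ) := self_mem_nhdsWithin
  obtain ⟨h, hhT, hhγ, hhμ, hKle, herr, hhpos⟩ :=
    (hev1.and (hev2.and (hev3.and (hKev.and (herr0.and hevpos))))).exists
  rw [mem_Ioi] at hhpos
  have hμ1 : 0 < 1 + h * μ := by
    have h2 : h * (|μ| + 1) < 1 := by
      rw [← lt_div_iff₀ (by positivity)]; exact hhμ
    nlinarith [neg_abs_le μ, abs_nonneg μ]
  have hγlt : h * γ < β := by
    have h1 : h * γ ≤ h * |γ| := mul_le_mul_of_nonneg_left (le_abs_self γ) hhpos.le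
    have h2 : h * (|γ| + 1) < β := by
      rw [← lt_div_iff₀ (by positivity)]; exact hhγ
    nlinarith [abs_nonneg γ]
  set w : Fin n → ℝ := v - h • K v with hwdef
  have hKw : K w = K v - h • K (K v) := by rw [hwdef, map_sub, map_smul]
  have hwid : v = (ContinuousLinearMap.id ℝ (Fin n → ℝ) + h • K) w + (h*h) • K (K v) := by
    have e : (ContinuousLinearMap.id ℝ (Fin n → ℝ) + h • K) w = w + h • K w := by
      simp [ContinuousLinearMap.add_apply, ContinuousLinearMap.smul_apply]
    rw [e, hKw, hwdef, smul_sub, smul_smul]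
    abel
  have hvnorm : c' ≤ (1 + h * μ) * ‖w‖ + (h*h) * C := by
    have t1 := (ContinuousLinearMap.id ℝ (Fin n → ℝ) + h • K).le_opNorm w
    have t2 : ‖(h*h) • K (K v)‖ = (h*h) * C := by
      have e := norm_smul (h*h) (K (K v))
      rw [Real.norm_eq_abs, abs_of_nonneg (by positivity)] at e
      rw [e, hCdef]
    have t3 := norm_add_le ((ContinuousLinearMap.id ℝ (Fin n → ℝ) + h • K) w)
      ((h*h) • K (K v))
    rw [← hwid] at t3
    have t4 := mul_le_mul_of_nonneg_right hKle (norm_nonneg w)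
    rw [hc']
    nlinarith [norm_nonneg w]
  have hpoly : (1 + h*μ) * (c' + h * (I * c' + β)) < c' - (h*h) * C := by
    have hexp : c' - (h*h)*C - (1 + h*μ) * (c' + h*(I*c'+β)) = h * (β - h * γ) := by
      rw [hγdef, hβdef]; ring
    nlinarith [mul_pos hhpos (sub_pos.2 hγlt)]
  have hwlow : c' + h * (I * c' + β) < ‖w‖ := by
    have hmul : (1 + h*μ) * (c' + h*(I*c'+β)) < (1 + h*μ) * ‖w‖ := by linarith
    exact (mul_lt_mul_iff_right₀ hμ1).mp hmul
  have herr' : ‖X (T - h) - v + h • D‖ ≤ β * h := by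
    have e : T - h - T = -h := by ring
    have e2 : X (T - h) - X T - (-h) • D = X (T - h) - v + h • D := by
      rw [hv, neg_smul]; abel
    have e3 : ‖(-h : ℝ)‖ = h := by rw [Real.norm_eq_abs, abs_neg, abs_of_pos hhpos]
    have := herr
    simp only [Function.comp] at this
    rw [e, e2, e3] at this
    exact this
  have hlow2 : ‖v - h • D‖ ≤ ‖X (T - h)‖ + ‖X (T - h) - v + h • D‖ := by
    have e : v - h • D = X (T - h) - (X (T - h) - v + h • D) := by abel
    rw [e]; exact norm_sub_le _ _
  have hvD : v - h • D = w - h • V := by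
    rw [hwdef, hKapp, hDdef, smul_add]; abel
  have hVsmul : ‖h • V‖ = h * ‖V‖ := by
    have e := norm_smul h V
    rw [Real.norm_eq_abs, abs_of_pos hhpos] at e
    exact e
  have hwV : ‖w‖ - ‖h • V‖ ≤ ‖w - h • V‖ := norm_sub_norm_le _ _
  have hhV : h * ‖V‖ ≤ h * (I * c') := mul_le_mul_of_nonneg_left hVnorm hhpos.le
  have hXTh : ‖X (T - h)‖ < c := hless _ (by linarith) (by linarith)
  have hfinal : c' < ‖X (T - h)‖ := by
    rw [hvD] at hlow2
    nlinarith [hwlow, hwV, hhV, hVsmul, herr', hlow2]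
  linarith
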